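/- Let V₁ be a finite-dimensional real vector space and let V₂ be a finite-dimensional real vector space endowed with a complex structure J. Let φ: V₁ × V₂ → W^{p,p} be a bilinear map satisfying 𝒯φ(X,Y) = φ(X,JY) for all X ∈ V₁ and Y ∈ V₂, and let 𝒰 = S(φ) ∩ S(φ)^⊥ and Ω = π₁(𝒰). Then dim Ω = dim 𝒰, and if φ_Ω denotes the composition of φ with the map W^{p,p} → Ω ⊕ Ω given by applying on each component the orthogonal projection π_Ω: U^p → Ω, then S(φ_Ω) = 𝒰. -/

import Mathlib

open Module LinearMap RealInnerProductSpace

/-- Proposition (even), part (iv): if `Ω = π₁(𝒰)` then `dim Ω = dim 𝒰`, and the bilinear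
map `φ_Ω`, obtained by applying the orthogonal projection `π_Ω` on each component of `φ`,
satisfies `S(φ_Ω) = 𝒰`. -/
theorem stmt_7
    {V₁ V₂ U : Type*}
    [AddCommGroup V₁] [Module ℝ V₁] [FiniteDimensional ℝ V₁]
    [AddCommGroup V₂] [Module ℝ V₂] [FiniteDimensional ℝ V₂]
    [NormedAddCommGroup U] [InnerProductSpace ℝ U] [FiniteDimensional ℝ U]
    (p : ℕ) (hU : finrank ℝ U = p)
    (J : V₂ →ₗ[ℝ] V₂) (hJ : ∀ Y, J (J Y) = -Y)
    (B : LinearMap.BilinForm ℝ (U × U))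
    (hB : ∀ v w : U × U, B v w = ⟪v.1, w.1⟫ - ⟪v.2, w.2⟫)
    (T : (U × U) →ₗ[ℝ] (U × U)) (hT : ∀ v : U × U, T v = (v.2, -v.1))
    (φ : V₁ →ₗ[ℝ] V₂ →ₗ[ℝ] (U × U))
    (hφ : ∀ X Y, T (φ X Y) = φ X (J Y))
    (Sφ : Submodule ℝ (U × U))
    (hSφ : Sφ = Submodule.span ℝ {w | ∃ X Y, φ X Y = w})
    (𝒰 : Submodule ℝ (U × U)) (h𝒰 : 𝒰 = Sφ ⊓ B.orthogonal Sφ)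
    (Ω : Submodule ℝ U) (hΩ : Ω = Submodule.map (LinearMap.fst ℝ U U) 𝒰) :
    finrank ℝ Ω = finrank ℝ 𝒰 ∧
      Submodule.span ℝ {w : U × U | ∃ X Y,
        w = ((Submodule.orthogonalProjectionOnto Ω ((φ X Y).1) : U),
             (Submodule.orthogonalProjectionOnto Ω ((φ X Y).2) : U))} = 𝒰 := by
  -- T maps Sφ into itself
  have hSφT : ∀ w ∈ Sφ, T w ∈ Sφ := by
    intro w hw
    rw [hSφ] at hw ⊢
    have hle : Submodule.map T (Submodule.span ℝ {w | ∃ X Y, φ X Y = w})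
        ≤ Submodule.span ℝ {w | ∃ X Y, φ X Y = w} := by
      rw [Submodule.map_span]
      apply Submodule.span_le.2
      rintro _ ⟨_, ⟨X, Y, rfl⟩, rfl⟩
      exact Submodule.subset_span ⟨X, J Y, (hφ X Y).symm⟩
    exact hle (Submodule.mem_map_of_mem hw)
  -- B w (T v) = B (T w) v
  have hBT : ∀ v w : U × U, B w (T v) = B (T w) v := by
    intro v w
    rw [hB, hB, hT, hT]
    simp [inner_neg_left, inner_neg_right, real_inner_comm]
    ring
  -- T maps 𝒰 into itself
  have h𝒰T : ∀ u ∈ 𝒰, T u ∈ 𝒰 := by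
    intro u hu
    rw [h𝒰] at hu ⊢
    rw [Submodule.mem_inf] at hu ⊢
    refine ⟨hSφT u hu.1, LinearMap.BilinForm.mem_orthogonal_iff.2 ?_⟩
    intro n hn
    show B n (T u) = 0
    rw [hBT]
    exact hu.2 (T n) (hSφT n hn)
  have horth : ∀ w ∈ Sφ, ∀ u ∈ 𝒰, B w u = 0 := by
    intro w hw u hu
    exact (h𝒰 ▸ hu).2 w hw
  have hiso : ∀ u ∈ 𝒰, ∀ v ∈ 𝒰, B u v = 0 := by
    intro u hu v hv
    exact horth u (h𝒰 ▸ hu).1 v hv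
  -- an element of 𝒰 with vanishing first coordinate is zero
  have hzero : ∀ u ∈ 𝒰, (u : U × U).1 = 0 → u = 0 := by
    intro u hu h1
    have h0 : B u u = 0 := hiso u hu u hu
    rw [hB, h1] at h0
    simp only [inner_zero_left, zero_sub, neg_eq_zero, inner_self_eq_zero] at h0
    exact Prod.ext h1 h0
  -- first coordinates and second coordinates of 𝒰 lie in Ω
  have hΩ1 : ∀ u ∈ 𝒰, (u : U × U).1 ∈ Ω := by
    intro u hu; rw [hΩ]; exact ⟨u, hu, rfl⟩
  have hΩ2 : ∀ u ∈ 𝒰, (u : U × U).2 ∈ Ω := by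
    intro u hu
    have h := hΩ1 (T u) (h𝒰T u hu)
    rwa [hT] at h
  -- projection facts
  have hproj : ∀ (x : U), ∀ a ∈ Ω, ⟪(Submodule.orthogonalProjectionOnto Ω x : U), a⟫ = ⟪x, a⟫ := by
    intro x a ha
    have h : ⟪x - (Submodule.orthogonalProjectionOnto Ω x : U), a⟫ = 0 := Ω.starProjection_inner_eq_zero x a ha
    rw [inner_sub_left] at h
    linarith
  -- part 1 : finrank
  have hrank : finrank ℝ Ω = finrank ℝ 𝒰 := by
    have hr : Ω = LinearMap.range ((LinearMap.fst ℝ U U).comp 𝒰.subtype) := by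
      rw [LinearMap.range_comp, Submodule.range_subtype, hΩ]
    have hinj : Function.Injective ((LinearMap.fst ℝ U U).comp 𝒰.subtype) := by
      rw [← LinearMap.ker_eq_bot, Submodule.eq_bot_iff]
      rintro ⟨u, hu⟩ hku
      have : u.1 = 0 := hku
      exact Subtype.ext (hzero u hu this)
    rw [hr]
    exact LinearMap.finrank_range_of_inj hinj
  -- key step : the projection of any element of Sφ lies in 𝒰
  have hP𝒰 : ∀ w ∈ Sφ,
      (((Submodule.orthogonalProjectionOnto Ω w.1 : U), (Submodule.orthogonalProjectionOnto Ω w.2 : U)) : U × U) ∈ 𝒰 := by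
    intro w hw
    have hmem : (Submodule.orthogonalProjectionOnto Ω w.1 : U) ∈ Submodule.map (LinearMap.fst ℝ U U) 𝒰 := by
      rw [← hΩ]; exact (Submodule.orthogonalProjectionOnto Ω w.1).2
    obtain ⟨u, hu, hu1⟩ := hmem
    have hu1' : u.1 = (Submodule.orthogonalProjectionOnto Ω w.1 : U) := hu1
    suffices h : (((Submodule.orthogonalProjectionOnto Ω w.1 : U), (Submodule.orthogonalProjectionOnto Ω w.2 : U)) : U × U)
        = u by rw [h]; exact hu
    have key : ∀ a ∈ Ω, ⟪(Submodule.orthogonalProjectionOnto Ω w.2 : U) - u.2, a⟫ = 0 := by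
      intro a ha
      rw [hΩ] at ha
      obtain ⟨v, hv, hv1⟩ := ha
      have hv1' : v.1 = a := hv1
      have hTv : T v ∈ 𝒰 := h𝒰T v hv
      have e1 : B w (T v) = 0 := horth w hw (T v) hTv
      have e2 : B u (T v) = 0 := hiso u hu (T v) hTv
      rw [hB, hT] at e1 e2
      simp only [inner_neg_right, sub_neg_eq_add] at e1 e2
      have hv2Ω : v.2 ∈ Ω := hΩ2 v hv
      have p1 : ⟪(Submodule.orthogonalProjectionOnto Ω w.2 : U), a⟫ = ⟪w.2, a⟫ := by
        apply hproj; rw [hΩ]; exact ⟨v, hv, hv1⟩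
      have p2 : ⟪(Submodule.orthogonalProjectionOnto Ω w.1 : U), v.2⟫ = ⟪w.1, v.2⟫ := hproj w.1 v.2 hv2Ω
      rw [inner_sub_left, p1]
      rw [hv1'] at e1 e2
      rw [hu1'] at e2
      linarith
    have hd : (Submodule.orthogonalProjectionOnto Ω w.2 : U) - u.2 ∈ Ω :=
      Submodule.sub_mem _ (Submodule.orthogonalProjectionOnto Ω w.2).2 (hΩ2 u hu)
    have h0 : (Submodule.orthogonalProjectionOnto Ω w.2 : U) - u.2 = 0 := by
      have := key _ hd
      rwa [inner_self_eq_zero] at this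
    exact Prod.ext hu1'.symm (by rw [sub_eq_zero] at h0; exact h0)
  -- the projection map as a linear map
  set P : (U × U) →ₗ[ℝ] (U × U) :=
    (Ω.subtype.comp (Submodule.orthogonalProjectionOnto Ω).toLinearMap).prodMap
      (Ω.subtype.comp (Submodule.orthogonalProjectionOnto Ω).toLinearMap) with hP
  have hPapp : ∀ w : U × U,
      P w = ((Submodule.orthogonalProjectionOnto Ω w.1 : U), (Submodule.orthogonalProjectionOnto Ω w.2 : U)) := by
    intro w; rfl
  refine ⟨hrank, le_antisymm ?_ ?_⟩
  · apply Submodule.span_le.2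
    rintro w ⟨X, Y, rfl⟩
    exact hP𝒰 (φ X Y) (hSφ ▸ Submodule.subset_span ⟨X, Y, rfl⟩)
  · intro u hu
    have huS : u ∈ Sφ := (h𝒰 ▸ hu).1
    have hPu : P u = u := by
      rw [hPapp]
      have h1 : (Submodule.orthogonalProjectionOnto Ω u.1 : U) = u.1 := Ω.starProjection_eq_self_iff.2 (hΩ1 u hu)
      have h2 : (Submodule.orthogonalProjectionOnto Ω u.2 : U) = u.2 := Ω.starProjection_eq_self_iff.2 (hΩ2 u hu)
      exact Prod.ext h1 h2
    have hmap : Submodule.map P Sφ ≤ Submodule.span ℝ {w : U × U | ∃ X Y,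
        w = ((Submodule.orthogonalProjectionOnto Ω ((φ X Y).1) : U),
             (Submodule.orthogonalProjectionOnto Ω ((φ X Y).2) : U))} := by
      rw [hSφ, Submodule.map_span]
      apply Submodule.span_le.2
      rintro _ ⟨_, ⟨X, Y, rfl⟩, rfl⟩
      exact Submodule.subset_span ⟨X, Y, hPapp _⟩
    have : P u ∈ Submodule.map P Sφ := Submodule.mem_map_of_mem huS
    rw [hPu] at this
    exact hmap this
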